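/- For each n and a ∈ ℝ the quantity U_n(a) := sup{ E_P[u_n(X^n+Y)] : Y ∈ L^1(Q̂), E_{Q̂}[Y] ≤ a, u_n(X^n+Y) P-integrable } is a real number, and for every a = (a^1,…,a^N) ∈ ℝ^N with Σ_{n=1}^N a^n = A one has Σ_{n=1}^N U_n(a^n) ≤ Σ_{n=1}^N E_P[u_n(X^n+Ŷ^n)]. -/

import Mathlib

open MeasureTheory
open scoped NNReal ENNReal

private lemma jensen_exp_sum {N : ℕ} (w x : Fin N → ℝ) (hw : ∀ i, 0 ≤ w i)
    (h1 : ∑ i, w i = 1) :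
    Real.exp (∑ i, w i * x i) ≤ ∑ i, w i * Real.exp (x i) := by
  have h := convexOn_exp.map_sum_le (t := Finset.univ) (w := w) (p := x)
    (fun i _ => hw i) h1 (fun i _ => Set.mem_univ _)
  simpa [smul_eq_mul] using h

private lemma jensen_exp_integral {Ω : Type*} [MeasurableSpace Ω] (μ : Measure Ω)
    [IsProbabilityMeasure μ] {Z : Ω → ℝ} (hZ : Integrable Z μ)
    (hEZ : Integrable (fun ω => Real.exp (Z ω)) μ) :
    Real.exp (∫ ω, Z ω ∂μ) ≤ ∫ ω, Real.exp (Z ω) ∂μ := by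
  set m := ∫ ω, Z ω ∂μ with hm
  have key : ∀ ω, Real.exp m * (Z ω - m) + Real.exp m ≤ Real.exp (Z ω) := by
    intro ω
    have h := Real.add_one_le_exp (Z ω - m)
    have h2 : Real.exp m * ((Z ω - m) + 1) ≤ Real.exp m * Real.exp (Z ω - m) :=
      mul_le_mul_of_nonneg_left h (Real.exp_pos m).le
    calc Real.exp m * (Z ω - m) + Real.exp m = Real.exp m * ((Z ω - m) + 1) := by ring
    _ ≤ Real.exp m * Real.exp (Z ω - m) := h2
    _ = Real.exp (Z ω) := by rw [← Real.exp_add]; congr 1; ring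
  have hint : Integrable (fun ω => Real.exp m * (Z ω - m) + Real.exp m) μ :=
    ((hZ.sub (integrable_const m)).const_mul _).add (integrable_const _)
  have hmono := integral_mono hint hEZ key
  have i1 : Integrable (fun ω => Real.exp m * (Z ω - m)) μ := by
    exact (hZ.sub (integrable_const m)).const_mul _
  have i2 : Integrable (fun ω => Z ω - m) μ := by
    exact hZ.sub (integrable_const m)
  have hcalc : ∫ ω, (Real.exp m * (Z ω - m) + Real.exp m) ∂μ = Real.exp m := by
    rw [integral_add i1 (integrable_const _), integral_const_mul,
      integral_sub hZ (integrable_const m), integral_const]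
    simp [← hm]
  rwa [hcalc] at hmono

private lemma ereal_coe_sum {N : ℕ} (f : Fin N → ℝ) :
    ((∑ n, f n : ℝ) : EReal) = ∑ n, ((f n : ℝ) : EReal) := by
  induction (Finset.univ : Finset (Fin N)) using Finset.cons_induction with
  | empty => simp
  | cons a s ha ih => rw [Finset.sum_cons, Finset.sum_cons, EReal.coe_add, ih]

/-- Condition 2 of a SORTE for `B = C_ℝ` in the exponential case: the single-agent
    value functions `Uₙ(a)` (w.r.t. the equilibrium pricing measure `Q̂`) are finite
    real numbers, and the allocation `âⁿ := E_{Q̂}[Ŷⁿ]` is optimal for the systemic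
    problem `S^{Q̂}(A)`: for every `a ∈ ℝ^N` with `Σₙ aⁿ = A` one has
    `Σₙ Uₙ(aⁿ) ≤ Σₙ E_P[uₙ(Xⁿ+Ŷⁿ)]`. -/
theorem exponential_systemic_allocation_optimal
    {Ω : Type*} [MeasurableSpace Ω] (P : Measure Ω) [IsProbabilityMeasure P]
    (N : ℕ) (hN : 1 ≤ N) (A : ℝ)
    (α : Fin N → ℝ) (hα : ∀ n, 0 < α n)
    (u : Fin N → ℝ → ℝ) (hu : ∀ n x, u n x = 1 - Real.exp (-(α n * x)))
    (X : Fin N → Ω → ℝ) (hXmeas : ∀ n, Measurable (X n))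
    (hXexp : ∀ n, ∀ a : ℝ, 0 < a → Integrable (fun ω => Real.exp (a * |X n ω|)) P)
    (β : ℝ) (hβ : β = ∑ n, (α n)⁻¹)
    (Xbar : Ω → ℝ) (hXbar : ∀ ω, Xbar ω = ∑ n, X n ω)
    (ER : ℝ) (hER : ER = ∑ n, ((α n)⁻¹ / β) * Real.log (α n))
    (E : ℝ) (hE : E = ∫ ω, Real.exp (-(Xbar ω / β)) ∂P)
    (Qhat : Measure Ω)
    (hQhat : Qhat = P.withDensity (fun ω => ENNReal.ofReal (Real.exp (-(Xbar ω / β)) / E)))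
    (Yhat : Fin N → Ω → ℝ)
    (hYhat : ∀ k ω, Yhat k ω
      = -X k ω + Xbar ω / (α k * β) + (α k)⁻¹ * (A / β + Real.log (α k) - ER))
    (U : Fin N → ℝ → EReal)
    (hU : ∀ n a, U n a = sSup {s : EReal | ∃ Y : Ω → ℝ, Integrable Y Qhat ∧
      (∫ ω, Y ω ∂Qhat) ≤ a ∧ Integrable (fun ω => u n (X n ω + Y ω)) P ∧
      s = ((∫ ω, u n (X n ω + Y ω) ∂P : ℝ) : EReal)}) :
    (∀ n (a : ℝ), ∃ s : ℝ, U n a = (s : EReal)) ∧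
    (∀ a : Fin N → ℝ, (∑ n, a n) = A →
      (∑ n, U n (a n)) ≤ ((∑ n, ∫ ω, u n (X n ω + Yhat n ω) ∂P : ℝ) : EReal)) := by
  have hNpos : 0 < N := hN
  have hNne : (N : ℝ) ≠ 0 := Nat.cast_ne_zero.2 hNpos.ne'
  have hne : (Finset.univ : Finset (Fin N)).Nonempty := ⟨⟨0, hNpos⟩, Finset.mem_univ _⟩
  have hβpos : 0 < β := by
    rw [hβ]; exact Finset.sum_pos (fun n _ => inv_pos.2 (hα n)) hne
  have hXbarmeas : Measurable Xbar := by
    have h : Xbar = fun ω => ∑ n, X n ω := funext hXbar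
    rw [h]; exact Finset.measurable_sum _ fun n _ => hXmeas n
  -- integrability of exponentials of nonnegative weighted sums of |X n|
  have hexpsum : ∀ c : Fin N → ℝ, (∀ n, 0 ≤ c n) →
      Integrable (fun ω => Real.exp (∑ n, c n * |X n ω|)) P := by
    intro c hc
    have hmeas : Measurable fun ω => Real.exp (∑ n, c n * |X n ω|) :=
      Real.measurable_exp.comp (Finset.measurable_sum _ fun n _ =>
        ((hXmeas n).abs.const_mul _))
    have hterm : ∀ n : Fin N, Integrable
        (fun ω => (N : ℝ)⁻¹ * Real.exp ((N * c n) * |X n ω|)) P := by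
      intro n
      have h1 : Integrable (fun ω => Real.exp (((N : ℝ) * c n + 1) * |X n ω|)) P :=
        hXexp n _ (by have := hc n; positivity)
      refine (Integrable.mono h1 ?_ (Filter.Eventually.of_forall fun ω => ?_)).const_mul _
      · exact (Real.measurable_exp.comp ((hXmeas n).abs.const_mul _)).aestronglyMeasurable
      rw [Real.norm_eq_abs, Real.norm_eq_abs, abs_of_nonneg (Real.exp_nonneg _),
        abs_of_nonneg (Real.exp_nonneg _)]
      exact Real.exp_le_exp.2 (by nlinarith [abs_nonneg (X n ω)])
    refine (integrable_finset_sum Finset.univ (fun n _ => hterm n)).mono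
      hmeas.aestronglyMeasurable (Filter.Eventually.of_forall fun ω => ?_)
    rw [Real.norm_eq_abs, abs_of_nonneg (Real.exp_nonneg _), Real.norm_eq_abs]
    have hj := jensen_exp_sum (fun _ => (N : ℝ)⁻¹) (fun n => ((N : ℝ) * c n) * |X n ω|)
      (fun _ => by positivity)
      (by rw [Finset.sum_const, Finset.card_univ, Fintype.card_fin, nsmul_eq_mul]
          field_simp)
    have harg : ∑ n, (N : ℝ)⁻¹ * (((N : ℝ) * c n) * |X n ω|) = ∑ n, c n * |X n ω| := by
      refine Finset.sum_congr rfl fun n _ => ?_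
      field_simp
    rw [harg] at hj
    exact hj.trans (le_abs_self _)
  -- integrability from a bound by `C * exp (∑ cₙ |Xₙ|)`
  have hIbd : ∀ (h : Ω → ℝ) (C : ℝ) (c : Fin N → ℝ), (∀ n, 0 ≤ c n) →
      AEStronglyMeasurable h P →
      (∀ ω, |h ω| ≤ C * Real.exp (∑ n, c n * |X n ω|)) → Integrable h P := by
    intro h C c hc hm hb
    refine ((hexpsum c hc).const_mul C).mono hm (Filter.Eventually.of_forall fun ω => ?_)
    rw [Real.norm_eq_abs, Real.norm_eq_abs]
    exact (hb ω).trans (le_abs_self _)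
  -- pointwise bound on the exponent of the density
  have hXbar_abs : ∀ ω, -(Xbar ω / β) ≤ ∑ n, β⁻¹ * |X n ω| := by
    intro ω
    have h1 : -(Xbar ω / β) ≤ |Xbar ω| * β⁻¹ := by
      rw [div_eq_mul_inv, ← neg_mul]
      exact mul_le_mul_of_nonneg_right (neg_le_abs _) (inv_nonneg.2 hβpos.le)
    refine h1.trans ?_
    rw [hXbar]
    calc |∑ n, X n ω| * β⁻¹ ≤ (∑ n, |X n ω|) * β⁻¹ :=
          mul_le_mul_of_nonneg_right (Finset.abs_sum_le_sum_abs _ _) (inv_nonneg.2 hβpos.le)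
    _ = ∑ n, β⁻¹ * |X n ω| := by rw [Finset.sum_mul]; exact Finset.sum_congr rfl fun n _ => by ring
  have hexpXbar_le : ∀ ω, Real.exp (-(Xbar ω / β)) ≤ Real.exp (∑ n, β⁻¹ * |X n ω|) :=
    fun ω => Real.exp_le_exp.2 (hXbar_abs ω)
  have hI0meas : Measurable fun ω => Real.exp (-(Xbar ω / β)) :=
    Real.measurable_exp.comp ((hXbarmeas.div_const β).neg)
  have hI0 : Integrable (fun ω => Real.exp (-(Xbar ω / β))) P := by
    refine hIbd _ 1 (fun _ => β⁻¹) (fun _ => inv_nonneg.2 hβpos.le)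
      hI0meas.aestronglyMeasurable fun ω => ?_
    rw [abs_of_nonneg (Real.exp_nonneg _), one_mul]
    exact hexpXbar_le ω
  -- E is positive
  have hZ0int : Integrable (fun ω => -(Xbar ω / β)) P := by
    refine hIbd _ 1 (fun _ => β⁻¹) (fun _ => inv_nonneg.2 hβpos.le)
      ((hXbarmeas.div_const β).neg).aestronglyMeasurable fun ω => ?_
    rw [one_mul]
    have h1 : |-(Xbar ω / β)| = |Xbar ω| * β⁻¹ := by
      rw [abs_neg, abs_div, abs_of_pos hβpos, div_eq_mul_inv]
    have h2 : |Xbar ω| * β⁻¹ ≤ ∑ n, β⁻¹ * |X n ω| := by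
      rw [hXbar]
      calc |∑ n, X n ω| * β⁻¹ ≤ (∑ n, |X n ω|) * β⁻¹ :=
            mul_le_mul_of_nonneg_right (Finset.abs_sum_le_sum_abs _ _) (inv_nonneg.2 hβpos.le)
      _ = ∑ n, β⁻¹ * |X n ω| := by
            rw [Finset.sum_mul]; exact Finset.sum_congr rfl fun n _ => by ring
    have h3 : (∑ n, β⁻¹ * |X n ω|) ≤ Real.exp (∑ n, β⁻¹ * |X n ω|) := by
      linarith [Real.add_one_le_exp (∑ n, β⁻¹ * |X n ω|)]
    rw [h1]; exact h2.trans h3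
  have hEpos : 0 < E := by
    rw [hE]
    exact lt_of_lt_of_le (Real.exp_pos _) (jensen_exp_integral P hZ0int hI0)
  -- the density as an ℝ≥0-valued function
  set g : Ω → ℝ := fun ω => Real.exp (-(Xbar ω / β)) / E with hgdef
  have hg0 : ∀ ω, 0 ≤ g ω := fun ω => div_nonneg (Real.exp_nonneg _) hEpos.le
  have hgm : Measurable g := hI0meas.div_const E
  set f : Ω → ℝ≥0 := fun ω => (g ω).toNNReal with hfdef
  have hfm : Measurable f := hgm.real_toNNReal
  have hcoe : ∀ ω, (f ω : ℝ) = g ω := fun ω => Real.coe_toNNReal _ (hg0 ω)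
  have hQd : Qhat = P.withDensity fun ω => ((f ω : ℝ≥0) : ℝ≥0∞) := by
    rw [hQhat]; rfl
  have hgint : Integrable g P := hI0.div_const E
  -- Qhat is a probability measure
  have hQprob : IsProbabilityMeasure Qhat := by
    constructor
    rw [hQhat, withDensity_apply _ MeasurableSet.univ, setLIntegral_univ,
      ← ofReal_integral_eq_lintegral_ofReal hgint (Filter.Eventually.of_forall hg0)]
    have : ∫ ω, Real.exp (-(Xbar ω / β)) / E ∂P = 1 := by
      rw [integral_div, ← hE, div_self hEpos.ne']
    rw [this, ENNReal.ofReal_one]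
  haveI := hQprob
  -- transfer of integrability and integrals between Qhat and P
  have hQint : ∀ h : Ω → ℝ, Integrable h Qhat ↔ Integrable (fun ω => g ω * h ω) P := by
    intro h
    have heq : (fun ω => f ω • h ω) = fun ω => g ω * h ω :=
      funext fun ω => by rw [NNReal.smul_def, hcoe, smul_eq_mul]
    rw [hQd, integrable_withDensity_iff_integrable_smul hfm, heq]
  have hQintegral : ∀ h : Ω → ℝ, ∫ ω, h ω ∂Qhat = ∫ ω, g ω * h ω ∂P := by
    intro h
    rw [hQd, integral_withDensity_eq_integral_smul hfm]
    congr 1; funext ω; rw [NNReal.smul_def, hcoe, smul_eq_mul]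
  -- Q-integrability of the X's
  have hgX : ∀ ω, g ω * (∑ n, |X n ω|) ≤ E⁻¹ * Real.exp (∑ n, (β⁻¹ + 1) * |X n ω|) := by
    intro ω
    have hs0 : (0 : ℝ) ≤ ∑ n, |X n ω| := Finset.sum_nonneg fun n _ => abs_nonneg _
    have h2 : (∑ n, |X n ω|) ≤ Real.exp (∑ n, |X n ω|) := by
      linarith [Real.add_one_le_exp (∑ n, |X n ω|)]
    have h3 : g ω * (∑ n, |X n ω|) ≤
        (Real.exp (∑ n, β⁻¹ * |X n ω|) / E) * Real.exp (∑ n, |X n ω|) := by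
      apply mul_le_mul
      · show Real.exp (-(Xbar ω / β)) / E ≤ _
        gcongr
        exact hXbar_abs ω
      · exact h2
      · exact hs0
      · positivity
    refine h3.trans (le_of_eq ?_)
    rw [div_mul_eq_mul_div, ← Real.exp_add, ← Finset.sum_add_distrib, div_eq_inv_mul]
    congr 2
    exact Finset.sum_congr rfl fun n _ => by ring
  have hβ1nonneg : ∀ n : Fin N, (0:ℝ) ≤ β⁻¹ + 1 := fun _ => by positivity
  have hgXk : ∀ k, Integrable (fun ω => g ω * X k ω) P := by
    intro k
    refine hIbd _ E⁻¹ (fun _ => β⁻¹ + 1) hβ1nonneg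
      ((hgm.mul (hXmeas k)).aestronglyMeasurable) fun ω => ?_
    rw [abs_mul, abs_of_nonneg (hg0 ω)]
    refine le_trans (mul_le_mul_of_nonneg_left ?_ (hg0 ω)) (hgX ω)
    exact Finset.single_le_sum (fun n _ => abs_nonneg (X n ω)) (Finset.mem_univ k)
  have hXQ : ∀ k, Integrable (X k) Qhat := fun k => (hQint (X k)).2 (hgXk k)
  have hXbarQ : Integrable Xbar Qhat := by
    have h : Xbar = fun ω => ∑ n, X n ω := funext hXbar
    rw [h]
    exact integrable_finset_sum _ fun n _ => hXQ n
  -- notation for the Qhat-means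
  set q : Fin N → ℝ := fun n => ∫ ω, X n ω ∂Qhat with hqdef
  set qbar : ℝ := ∫ ω, Xbar ω ∂Qhat with hqbardef
  have hqbar_sum : qbar = ∑ n, q n := by
    rw [hqbardef]
    have h : (fun ω => Xbar ω) = fun ω => ∑ n, X n ω := funext hXbar
    rw [h, integral_finset_sum _ fun n _ => hXQ n]
  -- the universal single-agent bound
  have hbound : ∀ (n : Fin N) (a : ℝ) (Y : Ω → ℝ), Integrable Y Qhat →
      (∫ ω, Y ω ∂Qhat) ≤ a → Integrable (fun ω => u n (X n ω + Y ω)) P →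
      ∫ ω, u n (X n ω + Y ω) ∂P
        ≤ 1 - Real.exp (-(α n * (a + q n)) + qbar / β + Real.log E) := by
    intro n a Y hY1 hY2 hY3
    have hexpXY : Integrable (fun ω => Real.exp (-(α n * (X n ω + Y ω)))) P := by
      have h : (fun ω => Real.exp (-(α n * (X n ω + Y ω))))
          = fun ω => 1 - u n (X n ω + Y ω) := by
        funext ω; rw [hu]; ring
      rw [h]
      exact (integrable_const 1).sub hY3
    set Z : Ω → ℝ := fun ω => -(α n) * (X n ω + Y ω) + Xbar ω * β⁻¹ + Real.log E with hZdef
    have hgZ : (fun ω => g ω * Real.exp (Z ω))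
        = fun ω => Real.exp (-(α n * (X n ω + Y ω))) := by
      funext ω
      show Real.exp (-(Xbar ω / β)) / E *
        Real.exp (-(α n) * (X n ω + Y ω) + Xbar ω * β⁻¹ + Real.log E)
        = Real.exp (-(α n * (X n ω + Y ω)))
      have e1 : -(α n) * (X n ω + Y ω) + Xbar ω * β⁻¹ + Real.log E
          = (-(α n * (X n ω + Y ω))) + (Xbar ω * β⁻¹ + Real.log E) := by ring
      rw [e1, Real.exp_add, Real.exp_add, Real.exp_log hEpos]
      have key : Real.exp (-(Xbar ω / β)) * Real.exp (Xbar ω * β⁻¹) = 1 := by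
        rw [← Real.exp_add]
        have e2 : -(Xbar ω / β) + Xbar ω * β⁻¹ = 0 := by field_simp; ring
        rw [e2, Real.exp_zero]
      calc Real.exp (-(Xbar ω / β)) / E *
            (Real.exp (-(α n * (X n ω + Y ω))) * (Real.exp (Xbar ω * β⁻¹) * E))
          = (Real.exp (-(Xbar ω / β)) * Real.exp (Xbar ω * β⁻¹))
            * Real.exp (-(α n * (X n ω + Y ω))) * (E / E) := by ring
      _ = Real.exp (-(α n * (X n ω + Y ω))) := by
            rw [key, div_self hEpos.ne']; ring
    have iA : Integrable (fun ω => -(α n) * (X n ω + Y ω)) Qhat := by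
      exact ((hXQ n).add hY1).const_mul _
    have iB : Integrable (fun ω => Xbar ω * β⁻¹) Qhat := by
      exact hXbarQ.mul_const _
    have iAB : Integrable (fun ω => -(α n) * (X n ω + Y ω) + Xbar ω * β⁻¹) Qhat := by
      exact iA.add iB
    have iXY : Integrable (fun ω => X n ω + Y ω) Qhat := by
      exact (hXQ n).add hY1
    have hZQ : Integrable Z Qhat := by
      simp only [hZdef]
      exact iAB.add (integrable_const _)
    have hexpZQ : Integrable (fun ω => Real.exp (Z ω)) Qhat := by
      rw [hQint, hgZ]
      exact hexpXY
    have hZint : ∫ ω, Real.exp (Z ω) ∂Qhat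
        = ∫ ω, Real.exp (-(α n * (X n ω + Y ω))) ∂P := by
      rw [hQintegral, hgZ]
    have hjen := jensen_exp_integral Qhat hZQ hexpZQ
    have hZval : ∫ ω, Z ω ∂Qhat
        = -(α n) * (q n + ∫ ω, Y ω ∂Qhat) + qbar * β⁻¹ + Real.log E := by
      simp only [hZdef]
      rw [integral_add iAB (integrable_const _), integral_add iA iB,
        integral_const_mul, integral_add (hXQ n) hY1, integral_mul_const, integral_const]
      simp [hqdef, hqbardef, measure_univ]
    have hmono : Real.exp (-(α n * (a + q n)) + qbar / β + Real.log E)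
        ≤ Real.exp (∫ ω, Z ω ∂Qhat) := by
      apply Real.exp_le_exp.2
      rw [hZval]
      have h := mul_le_mul_of_nonneg_left hY2 (hα n).le
      have hq : qbar / β = qbar * β⁻¹ := by rw [div_eq_mul_inv]
      rw [hq]
      nlinarith [h]
    have huint : ∫ ω, u n (X n ω + Y ω) ∂P
        = 1 - ∫ ω, Real.exp (-(α n * (X n ω + Y ω))) ∂P := by
      have h : (fun ω => u n (X n ω + Y ω))
          = fun ω => 1 - Real.exp (-(α n * (X n ω + Y ω))) := funext fun ω => hu n _
      rw [h, integral_sub (integrable_const 1) hexpXY, integral_const]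
      simp
    rw [huint]
    have hchain : Real.exp (-(α n * (a + q n)) + qbar / β + Real.log E)
        ≤ ∫ ω, Real.exp (-(α n * (X n ω + Y ω))) ∂P := by
      calc Real.exp (-(α n * (a + q n)) + qbar / β + Real.log E)
          ≤ Real.exp (∫ ω, Z ω ∂Qhat) := hmono
      _ ≤ ∫ ω, Real.exp (Z ω) ∂Qhat := hjen
      _ = _ := hZint
    linarith
  -- the constant Y = a is admissible
  have hexpnegX : ∀ n : Fin N, Integrable (fun ω => Real.exp (-(α n * X n ω))) P := by
    intro n
    refine Integrable.mono (hXexp n (α n) (hα n)) ?_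
      (Filter.Eventually.of_forall fun ω => ?_)
    · exact (Real.measurable_exp.comp ((hXmeas n).const_mul _).neg).aestronglyMeasurable
    rw [Real.norm_eq_abs, Real.norm_eq_abs, abs_of_nonneg (Real.exp_nonneg _),
      abs_of_nonneg (Real.exp_nonneg _)]
    apply Real.exp_le_exp.2
    calc -(α n * X n ω) ≤ |α n * X n ω| := neg_le_abs _
    _ = α n * |X n ω| := by rw [abs_mul, abs_of_pos (hα n)]
  have hY0mem : ∀ (n : Fin N) (a : ℝ),
      ((∫ ω, u n (X n ω + a) ∂P : ℝ) : EReal) ∈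
        {s : EReal | ∃ Y : Ω → ℝ, Integrable Y Qhat ∧
          (∫ ω, Y ω ∂Qhat) ≤ a ∧ Integrable (fun ω => u n (X n ω + Y ω)) P ∧
          s = ((∫ ω, u n (X n ω + Y ω) ∂P : ℝ) : EReal)} := by
    intro n a
    have hint : Integrable (fun ω => u n (X n ω + a)) P := by
      have h : (fun ω => u n (X n ω + a))
          = fun ω => 1 - Real.exp (-(α n * a)) * Real.exp (-(α n * X n ω)) := by
        funext ω
        rw [hu, ← Real.exp_add]
        congr 2
        ring
      rw [h]
      exact (integrable_const 1).sub ((hexpnegX n).const_mul _)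
    refine ⟨fun _ => a, integrable_const a, ?_, hint, rfl⟩
    rw [integral_const]
    simp
  have hUle : ∀ (n : Fin N) (a : ℝ), U n a
      ≤ ((1 - Real.exp (-(α n * (a + q n)) + qbar / β + Real.log E) : ℝ) : EReal) := by
    intro n a
    rw [hU]
    apply sSup_le
    rintro s ⟨Y, h1, h2, h3, rfl⟩
    exact EReal.coe_le_coe_iff.2 (hbound n a Y h1 h2 h3)
  have hUge : ∀ (n : Fin N) (a : ℝ),
      ((∫ ω, u n (X n ω + a) ∂P : ℝ) : EReal) ≤ U n a := by
    intro n a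
    rw [hU]
    exact le_sSup (hY0mem n a)
  constructor
  · -- finiteness
    intro n a
    have h1 := hUge n a
    have h2 := hUle n a
    have htop : U n a ≠ ⊤ := by
      intro h
      rw [h] at h2
      exact (EReal.coe_ne_top _) (top_le_iff.1 h2)
    have hbot : U n a ≠ ⊥ := by
      intro h
      rw [h] at h1
      exact (EReal.coe_ne_bot _) (le_bot_iff.1 h1)
    exact ⟨(U n a).toReal, (EReal.coe_toReal htop hbot).symm⟩
  · -- optimality
    intro a ha
    have hstep1 : (∑ n, U n (a n)) ≤
        ((∑ n, (1 - Real.exp (-(α n * (a n + q n)) + qbar / β + Real.log E)) : ℝ) : EReal) := by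
      rw [ereal_coe_sum]
      exact Finset.sum_le_sum fun n _ => hUle n (a n)
    refine hstep1.trans (EReal.coe_le_coe_iff.2 ?_)
    -- the value of the integrals at Yhat
    have hRHS : ∀ n : Fin N, ∫ ω, u n (X n ω + Yhat n ω) ∂P
        = 1 - Real.exp (ER - A / β - Real.log (α n)) * E := by
      intro n
      have harg : ∀ ω, -(α n * (X n ω + Yhat n ω))
          = -(Xbar ω / β) + (ER - A / β - Real.log (α n)) := by
        intro ω
        rw [hYhat]
        field_simp [(hα n).ne', hβpos.ne']
        ring
      have heq : (fun ω => u n (X n ω + Yhat n ω))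
          = fun ω => 1 - Real.exp (-(Xbar ω / β)) * Real.exp (ER - A / β - Real.log (α n)) := by
        funext ω
        rw [hu, harg, Real.exp_add]
      rw [heq, integral_sub (integrable_const 1) (hI0.mul_const _), integral_const,
        integral_mul_const, ← hE]
      simp only [probReal_univ, ENNReal.toReal_one, one_smul]
      ring
    -- Jensen on the finite sum with weights wₙ = (αₙ)⁻¹/β
    have hw0 : ∀ n : Fin N, 0 ≤ (α n)⁻¹ / β := fun n =>
      div_nonneg (inv_nonneg.2 (hα n).le) hβpos.le
    have hw1 : ∑ n, (α n)⁻¹ / β = 1 := by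
      rw [← Finset.sum_div, ← hβ, div_self hβpos.ne']
    have hwα : ∀ n, ((α n)⁻¹ / β) * α n = β⁻¹ := fun n => by
      have h : ((α n)⁻¹ / β) * α n = ((α n)⁻¹ * α n) * β⁻¹ := by ring
      rw [h, inv_mul_cancel₀ (hα n).ne', one_mul]
    have hterm : ∀ n : Fin N,
        Real.exp (-(α n * (a n + q n)) + qbar / β + Real.log E)
        = ((α n)⁻¹ / β) * Real.exp ((-(α n * (a n + q n)) + qbar / β + Real.log E)
            + Real.log (α n * β)) := by
      intro n
      conv_rhs => rw [Real.exp_add, Real.exp_log (mul_pos (hα n) hβpos)]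
      have hαβ : ((α n)⁻¹ / β) * (α n * β) = 1 := by
        have h : ((α n)⁻¹ / β) * (α n * β) = ((α n)⁻¹ * α n) * (β⁻¹ * β) := by ring
        rw [h, inv_mul_cancel₀ (hα n).ne', inv_mul_cancel₀ hβpos.ne', one_mul]
      calc Real.exp (-(α n * (a n + q n)) + qbar / β + Real.log E)
          = (((α n)⁻¹ / β) * (α n * β))
            * Real.exp (-(α n * (a n + q n)) + qbar / β + Real.log E) := by rw [hαβ]; ring
      _ = ((α n)⁻¹ / β) * (Real.exp (-(α n * (a n + q n)) + qbar / β + Real.log E)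
            * (α n * β)) := by ring
    have hjsum := jensen_exp_sum (fun n => (α n)⁻¹ / β)
      (fun n => (-(α n * (a n + q n)) + qbar / β + Real.log E) + Real.log (α n * β))
      hw0 hw1
    -- compute the exponent
    have hexponent : ∑ n, ((α n)⁻¹ / β) *
        ((-(α n * (a n + q n)) + qbar / β + Real.log E) + Real.log (α n * β))
        = Real.log E - A / β + ER + Real.log β := by
      have hsplit : ∀ n : Fin N, ((α n)⁻¹ / β) *
          ((-(α n * (a n + q n)) + qbar / β + Real.log E) + Real.log (α n * β))
          = (-β⁻¹ * (a n + q n) + ((α n)⁻¹ / β) * (qbar / β + Real.log E))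
            + (((α n)⁻¹ / β) * Real.log (α n) + ((α n)⁻¹ / β) * Real.log β) := by
        intro n
        rw [Real.log_mul (hα n).ne' hβpos.ne']
        have h := hwα n
        linear_combination (-(a n + q n)) * h
      rw [Finset.sum_congr rfl fun n _ => hsplit n, Finset.sum_add_distrib,
        Finset.sum_add_distrib, Finset.sum_add_distrib]
      have e1 : ∑ n, -β⁻¹ * (a n + q n) = -β⁻¹ * (A + qbar) := by
        rw [← Finset.mul_sum, Finset.sum_add_distrib, ha, ← hqbar_sum]
      have e2 : ∑ n, ((α n)⁻¹ / β) * (qbar / β + Real.log E) = qbar / β + Real.log E := by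
        rw [← Finset.sum_mul, hw1, one_mul]
      have e3 : ∑ n, ((α n)⁻¹ / β) * Real.log (α n) = ER := hER.symm
      have e4 : ∑ n, ((α n)⁻¹ / β) * Real.log β = Real.log β := by
        rw [← Finset.sum_mul, hw1, one_mul]
      rw [e1, e2, e3, e4]
      field_simp
      ring
    -- the key inequality between the sums of exponentials
    have hfinal : (∑ n, Real.exp (ER - A / β - Real.log (α n)) * E)
        ≤ ∑ n, Real.exp (-(α n * (a n + q n)) + qbar / β + Real.log E) := by
      have hterm2 : ∀ n : Fin N, Real.exp (ER - A / β - Real.log (α n)) * E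
          = (α n)⁻¹ * (Real.exp (ER - A / β) * E) := by
        intro n
        rw [Real.exp_sub, Real.exp_log (hα n), div_mul_eq_mul_div, div_eq_mul_inv]
        ring
      have hLHS : (∑ n, Real.exp (ER - A / β - Real.log (α n)) * E)
          = Real.exp (Real.log E - A / β + ER + Real.log β) := by
        rw [Finset.sum_congr rfl fun n _ => hterm2 n, ← Finset.sum_mul, ← hβ]
        rw [show Real.log E - A / β + ER + Real.log β
            = (ER - A / β) + (Real.log E + Real.log β) from by ring,
          Real.exp_add, Real.exp_add, Real.exp_log hEpos, Real.exp_log hβpos]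
        ring
      rw [hLHS]
      calc Real.exp (Real.log E - A / β + ER + Real.log β)
          = Real.exp (∑ n, ((α n)⁻¹ / β) *
            ((-(α n * (a n + q n)) + qbar / β + Real.log E) + Real.log (α n * β))) := by
            rw [hexponent]
      _ ≤ ∑ n, ((α n)⁻¹ / β) * Real.exp ((-(α n * (a n + q n)) + qbar / β + Real.log E)
            + Real.log (α n * β)) := hjsum
      _ = ∑ n, Real.exp (-(α n * (a n + q n)) + qbar / β + Real.log E) :=
            (Finset.sum_congr rfl fun n _ => (hterm n).symm)
    -- conclude
    have hR : (∑ n, ∫ ω, u n (X n ω + Yhat n ω) ∂P)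
        = ∑ n, (1 - Real.exp (ER - A / β - Real.log (α n)) * E) :=
      Finset.sum_congr rfl fun n _ => hRHS n
    rw [hR, Finset.sum_sub_distrib, Finset.sum_sub_distrib]
    exact sub_le_sub_left hfinal _
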